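/- arXiv:1802.04672 — 4 statements merged into one kernel-verified Lean document; each statement's English description precedes it below -/
import Mathlib

section
/- Let f be an entire function satisfying |f(z)| ≤ A·e^{σ|z|} for all z ∈ ℂ (for some A, σ > 0) and |f(x)| ≤ A/(1+x²) for all x ∈ ℝ. Then for every z = x + iy ∈ ℂ, |f(z)| ≤ A·e^{σ|y|}/(1+x²). -/
open Complex Filter Set Asymptotics

lemma pl_upper_aux (f : ℂ → ℂ) (A σ : ℝ) (hA : 0 < A) (hσ : 0 < σ)
    (hf : Differentiable ℂ f)
    (hgrowth : ∀ z : ℂ, ‖f z‖ ≤ A * Real.exp (σ * ‖z‖))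
    (hreal : ∀ x : ℝ, ‖f (x : ℂ)‖ ≤ A / (1 + x ^ 2)) :
    ∀ z : ℂ, 0 ≤ z.im → ‖f z‖ * (1 + z.re ^ 2) ≤ A * Real.exp (σ * z.im) := by
  intro z hz
  have key : ∀ ε : ℝ, 0 < ε →
      ‖f z‖ * ‖z + I‖ ^ 2 * Real.exp (-(σ + ε) * z.im) ≤ A := by
    intro ε hε
    set F : ℂ → ℂ := fun w =>
      f (w * I) * Complex.exp ((↑(-(σ + ε)) : ℂ) * w) * (w * I + I) ^ 2 with hF
    have hFd : Differentiable ℂ F := by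
      apply ((hf.comp (differentiable_id.mul_const I)).mul
        ((differentiable_id.const_mul _).cexp)).mul
      exact ((differentiable_id.mul_const I).add_const I).pow 2
    have hnorm : ∀ w : ℂ, ‖F w‖ =
        ‖f (w * I)‖ * Real.exp (-(σ + ε) * w.re) * ‖w * I + I‖ ^ 2 := by
      intro w
      simp only [hF, norm_mul, norm_pow, Complex.norm_exp,
        Complex.re_ofReal_mul]
    have hmain : ∀ w : ℂ, 0 ≤ w.re → ‖F w‖ ≤ A := by
      intro w hw
      apply PhragmenLindelof.right_half_plane_of_tendsto_zero_on_real hFd.diffContOnCl ?_ ?_ ?_ hw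
      · -- growth
        refine ⟨1, one_lt_two, σ + 2, IsBigO.of_bound A ?_⟩
        rw [eventually_inf_principal]
        refine Eventually.of_forall fun w hw => ?_
        have hw' : (0:ℝ) ≤ w.re := le_of_lt hw
        have h1 : ‖f (w * I)‖ ≤ A * Real.exp (σ * ‖w‖) := by
          simpa [map_mul] using hgrowth (w * I)
        have h2 : Real.exp (-(σ + ε) * w.re) ≤ 1 := by
          apply Real.exp_le_one_iff.2
          nlinarith
        have h3 : ‖w * I + I‖ ^ 2 ≤ Real.exp (2 * ‖w‖) := by
          calc ‖w * I + I‖ ^ 2 ≤ (‖w‖ + 1) ^ 2 := by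
                have := norm_add_le (w * I) I
                have h4 : ‖w * I‖ = ‖w‖ := by simp [map_mul]
                apply pow_le_pow_left₀ (norm_nonneg _)
                simp [h4] at this ⊢
                simpa using this
            _ ≤ (Real.exp (‖w‖)) ^ 2 := by
                apply pow_le_pow_left₀ (by positivity)
                simpa [add_comm] using Real.add_one_le_exp (‖w‖)
            _ = Real.exp (2 * ‖w‖) := by
                rw [pow_two, ← Real.exp_add, two_mul]
        calc ‖F w‖ = ‖f (w * I)‖ * Real.exp (-(σ + ε) * w.re) * ‖w * I + I‖ ^ 2 :=
              hnorm w
          _ ≤ (A * Real.exp (σ * ‖w‖)) * 1 * Real.exp (2 * ‖w‖) := by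
              apply mul_le_mul _ h3 (by positivity) (by positivity)
              apply mul_le_mul h1 h2 (Real.exp_pos _).le (by positivity)
          _ = A * Real.exp ((σ + 2) * ‖w‖) := by
              rw [mul_one, mul_assoc, ← Real.exp_add]; ring_nf
          _ ≤ A * ‖Real.exp ((σ + 2) * ‖w‖ ^ (1:ℝ))‖ := by
              rw [Real.rpow_one, Real.norm_eq_abs, Real.abs_exp]
      · -- tendsto zero on real axis
        have hb : ∀ x : ℝ, 0 ≤ x → ‖F (x:ℂ)‖ ≤
            (A * Real.exp ε / ε ^ 2) * ((ε * (x+1)) ^ 2 * Real.exp (-(ε * (x+1)))) := by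
          intro x hx
          have e1 : ((x:ℂ) * I + I) = ((x+1:ℝ) : ℂ) * I := by push_cast; ring
          have hnx : ‖F (x:ℂ)‖ = ‖f ((x:ℂ)*I)‖ * Real.exp (-(σ+ε)*x) * (x+1)^2 := by
            rw [hnorm, e1]
            have : ‖((x+1:ℝ):ℂ) * I‖ = x + 1 := by
              rw [norm_mul, Complex.norm_real, Complex.norm_I, mul_one, Real.norm_eq_abs,
                _root_.abs_of_nonneg (by linarith : (0:ℝ) ≤ x+1)]
            rw [this]
            simp
          have h1 : ‖f ((x:ℂ)*I)‖ ≤ A * Real.exp (σ * x) := by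
            have := hgrowth ((x:ℂ) * I)
            simpa [map_mul, Complex.norm_real, Real.norm_eq_abs, _root_.abs_of_nonneg hx] using this
          have heq : (A * Real.exp ε / ε ^ 2) * ((ε * (x+1)) ^ 2 * Real.exp (-(ε * (x+1))))
              = A * (x+1)^2 * Real.exp (-(ε * x)) := by
            rw [show -(ε*(x+1)) = -(ε*x) - ε by ring, Real.exp_sub]
            have h2 := Real.exp_ne_zero ε
            field_simp
          rw [hnx, heq]
          have h3 : Real.exp (σ * x) * Real.exp (-(σ+ε)*x) = Real.exp (-(ε*x)) := by
            rw [← Real.exp_add]; ring_nf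
          calc ‖f ((x:ℂ)*I)‖ * Real.exp (-(σ+ε)*x) * (x+1)^2
              ≤ (A * Real.exp (σ * x)) * Real.exp (-(σ+ε)*x) * (x+1)^2 := by
                apply mul_le_mul_of_nonneg_right _ (by positivity)
                exact mul_le_mul_of_nonneg_right h1 (Real.exp_pos _).le
            _ = A * (x+1)^2 * Real.exp (-(ε * x)) := by
                rw [mul_assoc A, h3]; ring
        have t1 : Tendsto (fun x : ℝ => ε*(x+1)) atTop atTop :=
          Tendsto.const_mul_atTop hε (tendsto_atTop_add_const_right atTop 1 tendsto_id)
        have t2 : Tendsto (fun x : ℝ => (ε*(x+1))^2 * Real.exp (-(ε*(x+1)))) atTop (nhds 0) :=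
          (Real.tendsto_pow_mul_exp_neg_atTop_nhds_zero 2).comp t1
        have t3 := t2.const_mul (A * Real.exp ε / ε^2)
        rw [mul_zero] at t3
        apply squeeze_zero_norm' _ t3
        exact Filter.eventually_atTop.2 ⟨0, hb⟩
      · -- bounded by A on imaginary axis
        intro x
        have hx2 : (0:ℝ) < 1 + x ^ 2 := by positivity
        have e1 : ((x:ℂ) * I) * I = -(x:ℂ) := by
          rw [mul_assoc, I_mul_I, mul_neg_one]
        have := hnorm ((x : ℂ) * I)
        rw [e1] at this
        have e2 : ((x:ℂ) * I).re = 0 := by simp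
        rw [e2, mul_zero, Real.exp_zero, mul_one] at this
        have e3 : ‖-(x:ℂ) + I‖ ^ 2 = 1 + x ^ 2 := by
          rw [Complex.sq_norm, Complex.normSq_apply]
          simp
          ring
        rw [this, e3]
        have h5 : ‖f (-(x:ℂ))‖ ≤ A / (1 + x ^ 2) := by
          have := hreal (-x)
          simpa [neg_sq] using this
        calc ‖f (-(x:ℂ))‖ * (1 + x ^ 2) ≤ (A / (1 + x ^ 2)) * (1 + x ^ 2) :=
              mul_le_mul_of_nonneg_right h5 hx2.le
          _ = A := div_mul_cancel₀ A hx2.ne'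
    -- evaluate at w₀ = -(z*I)
    have hw0 : (0:ℝ) ≤ (-(z * I)).re := by
      rw [neg_re, mul_I_re, neg_neg]; exact hz
    have := hmain (-(z * I)) hw0
    rw [hnorm] at this
    have e1 : (-(z * I)) * I = z := by
      rw [neg_mul, mul_assoc, I_mul_I, mul_neg_one, neg_neg]
    have e2 : (-(z * I)).re = z.im := by rw [neg_re, mul_I_re, neg_neg]
    rw [e1, e2] at this
    rw [mul_right_comm] at this
    exact this
  -- let ε → 0
  have key2 : ∀ ε : ℝ, 0 < ε →
      ‖f z‖ * ‖z + I‖ ^ 2 ≤ A * Real.exp ((σ + ε) * z.im) := by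
    intro ε hε
    have h := key ε hε
    have : ‖f z‖ * ‖z + I‖ ^ 2
        = ‖f z‖ * ‖z + I‖ ^ 2 * Real.exp (-(σ + ε) * z.im)
          * Real.exp ((σ + ε) * z.im) := by
      rw [mul_assoc, ← Real.exp_add, neg_mul, neg_add_cancel, Real.exp_zero, mul_one]
    rw [this]
    exact mul_le_mul_of_nonneg_right h (Real.exp_pos _).le
  have hlim : Tendsto (fun ε : ℝ => A * Real.exp ((σ + ε) * z.im)) (nhdsWithin 0 (Ioi 0))
      (nhds (A * Real.exp (σ * z.im))) := by
    have hc : Continuous fun ε : ℝ => A * Real.exp ((σ + ε) * z.im) := by continuity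
    have := hc.tendsto 0
    simp only [add_zero] at this
    exact this.mono_left nhdsWithin_le_nhds
  have habs : ‖f z‖ * ‖z + I‖ ^ 2 ≤ A * Real.exp (σ * z.im) := by
    apply ge_of_tendsto hlim
    filter_upwards [self_mem_nhdsWithin] with ε hε using key2 ε hε
  have hgeom : 1 + z.re ^ 2 ≤ ‖z + I‖ ^ 2 := by
    rw [Complex.sq_norm, Complex.normSq_apply]
    simp only [add_re, add_im, I_re, I_im, add_zero]
    nlinarith
  calc ‖f z‖ * (1 + z.re ^ 2) ≤ ‖f z‖ * ‖z + I‖ ^ 2 :=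
        mul_le_mul_of_nonneg_left hgeom (norm_nonneg _)
    _ ≤ A * Real.exp (σ * z.im) := habs

/-- Phragmén–Lindelöf bound: an entire function of exponential type `σ`
(with constant `A`) that has moderate decay `A/(1+x²)` on the real line satisfies
`|f(z)| ≤ A e^{σ|y|}/(1+x²)` everywhere on `ℂ`. -/
theorem exp_type_moderate_decay_bound
    (f : ℂ → ℂ) (A σ : ℝ) (hA : 0 < A) (hσ : 0 < σ)
    (hf : Differentiable ℂ f)
    (hgrowth : ∀ z : ℂ, ‖f z‖ ≤ A * Real.exp (σ * ‖z‖))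
    (hreal : ∀ x : ℝ, ‖f (x : ℂ)‖ ≤ A / (1 + x ^ 2)) :
    ∀ z : ℂ, ‖f z‖ ≤ A * Real.exp (σ * |z.im|) / (1 + z.re ^ 2) := by
  intro z
  have hpos : (0:ℝ) < 1 + z.re ^ 2 := by positivity
  rw [le_div_iff₀ hpos]
  rcases le_total 0 z.im with hy | hy
  · have := pl_upper_aux f A σ hA hσ hf hgrowth hreal z hy
    rwa [_root_.abs_of_nonneg hy]
  · set g : ℂ → ℂ := fun w => f (-w) with hg
    have hgd : Differentiable ℂ g := hf.comp differentiable_id.neg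
    have hggrowth : ∀ w : ℂ, ‖g w‖ ≤ A * Real.exp (σ * ‖w‖) := by
      intro w
      simpa [hg, norm_neg] using hgrowth (-w)
    have hgreal : ∀ x : ℝ, ‖g (x : ℂ)‖ ≤ A / (1 + x ^ 2) := by
      intro x
      have := hreal (-x)
      simpa [hg, Complex.ofReal_neg, neg_sq] using this
    have h := pl_upper_aux g A σ hA hσ hgd hggrowth hgreal (-z)
      (by simpa using neg_nonneg.2 hy)
    simp only [hg, neg_neg, Complex.neg_re, Complex.neg_im, neg_sq] at h
    rwa [_root_.abs_of_nonpos hy]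
end

section
/- Let f be an entire function, x ∈ ℝ, and suppose there exist A, σ > 0 such that |f^{(n)}(x)| ≤ A·σ^n for all n ≥ 1. Let α > Aσ and let R > 0 satisfy R < (1/σ)·log(1 + |α + f'(x)|/(Aσ)). Then the function g(z) = αz + f(z) is injective on the open disk D_R(x) = {z ∈ ℂ : |z − x| < R}. -/
/-- If `f` is entire with `|f⁽ⁿ⁾(x)| ≤ Aσⁿ` for `n ≥ 1`, `α > Aσ`, and
`R < (1/σ) log(1 + |α + f'(x)|/(Aσ))`, then `g(z) = αz + f(z)` is injective on
the open disk `D_R(x)`. -/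
theorem g_injective_on_disk
    (f : ℂ → ℂ) (hf : Differentiable ℂ f) (x : ℝ) (A σ α R : ℝ)
    (hA : 0 < A) (hσ : 0 < σ)
    (hderiv : ∀ n : ℕ, 1 ≤ n → ‖iteratedDeriv n f (x : ℂ)‖ ≤ A * σ ^ n)
    (hα : A * σ < α) (hR : 0 < R)
    (hRbound : R < (1 / σ) * Real.log (1 + ‖(α : ℂ) + deriv f (x : ℂ)‖ / (A * σ))) :
    Set.InjOn (fun z : ℂ => (α : ℂ) * z + f z) (Metric.ball (x : ℂ) R) := by
  have hAσ : 0 < A * σ := mul_pos hA hσ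
  set c : ℝ := ‖(α : ℂ) + deriv f (x : ℂ)‖ with hcdef
  have hc0 : 0 < c := by
    rcases lt_or_eq_of_le (norm_nonneg ((α : ℂ) + deriv f (x : ℂ))) with h | h
    · exact h
    · exfalso
      have hc : c = 0 := by rw [hcdef, ← h]
      rw [hc, zero_div, add_zero, Real.log_one, mul_zero] at hRbound
      linarith
  have h1 : (0 : ℝ) < 1 + c / (A * σ) := by positivity
  have hexp : Real.exp (σ * R) < 1 + c / (A * σ) := by
    have hL : σ * R < Real.log (1 + c / (A * σ)) := by
      have h2 : σ * R < σ * ((1 / σ) * Real.log (1 + c / (A * σ))) :=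
        mul_lt_mul_of_pos_left hRbound hσ
      rwa [← mul_assoc, mul_one_div, div_self hσ.ne', one_mul] at h2
    calc Real.exp (σ * R) < Real.exp (Real.log (1 + c / (A * σ))) :=
          Real.exp_lt_exp.mpr hL
      _ = 1 + c / (A * σ) := Real.exp_log h1
  set C : ℝ := A * σ * (Real.exp (σ * R) - 1) with hCdef
  have hCc : C < c := by
    have h2 : Real.exp (σ * R) - 1 < c / (A * σ) := by linarith
    calc C < A * σ * (c / (A * σ)) := mul_lt_mul_of_pos_left h2 hAσ
      _ = c := by field_simp
  -- differentiability of deriv f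
  have hF : Differentiable ℂ (deriv f) :=
    Complex.analyticOnNhd_univ_iff_differentiable.mp
      ((Complex.analyticOnNhd_univ_iff_differentiable.mpr hf).deriv)
  -- majorant series
  have hexpsum : HasSum (fun n : ℕ => (σ * R) ^ n / (Nat.factorial n)) (Real.exp (σ * R)) := by
    rw [Real.exp_eq_exp_ℝ]
    exact NormedSpace.expSeries_div_hasSum_exp (σ * R)
  have hM : HasSum (fun n : ℕ => A * σ * ((σ * R) ^ (n + 1) / (Nat.factorial (n + 1))))
      (A * σ * (Real.exp (σ * R) - 1)) := by
    refine HasSum.mul_left _ ?_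
    have := (hasSum_nat_add_iff' (f := fun n : ℕ => (σ * R) ^ n / (Nat.factorial n)) 1).mpr hexpsum
    simpa using this
  -- key bound on deriv f on the ball
  have key : ∀ ζ ∈ Metric.ball (x : ℂ) R, ‖deriv f ζ - deriv f (x : ℂ)‖ ≤ C := by
    intro ζ hζ
    have hr : ‖ζ - (x : ℂ)‖ < R := by
      rw [Metric.mem_ball, dist_eq_norm] at hζ; exact hζ
    have hr0 : (0 : ℝ) ≤ ‖ζ - (x : ℂ)‖ := norm_nonneg _
    set t : ℕ → ℂ := fun n => ((Nat.factorial n : ℕ) : ℂ)⁻¹ • (ζ - x) ^ n • iteratedDeriv n (deriv f) x with htdef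
    have hs : HasSum t (deriv f ζ) := Complex.hasSum_taylorSeries_of_entire hF x ζ
    have hs1 : HasSum (fun n => t (n + 1)) (deriv f ζ - deriv f (x : ℂ)) := by
      have := (hasSum_nat_add_iff' (f := t) 1).mpr hs
      simpa [htdef] using this
    -- termwise bound
    have hbound : ∀ n : ℕ, ‖t (n + 1)‖ ≤ A * σ * ((σ * R) ^ (n + 1) / (Nat.factorial (n + 1))) := by
      intro n
      have hit : iteratedDeriv (n + 1) (deriv f) (x : ℂ) = iteratedDeriv (n + 2) f (x : ℂ) :=
        (congrFun (iteratedDeriv_succ' (n := n + 1) (f := f)) (x : ℂ)).symm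
      have hd : ‖iteratedDeriv (n + 1) (deriv f) (x : ℂ)‖ ≤ A * σ ^ (n + 2) := by
        rw [hit]; exact hderiv (n + 2) (by omega)
      have hnorm : ‖t (n + 1)‖ =
          ((Nat.factorial (n + 1)) : ℝ)⁻¹ * (‖ζ - (x : ℂ)‖ ^ (n + 1) * ‖iteratedDeriv (n + 1) (deriv f) (x : ℂ)‖) := by
        simp [htdef, norm_smul, norm_pow]
      rw [hnorm]
      have hpow : ‖ζ - (x : ℂ)‖ ^ (n + 1) ≤ R ^ (n + 1) :=
        pow_le_pow_left₀ hr0 hr.le _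
      have hfac : (0 : ℝ) < ((Nat.factorial (n + 1)) : ℝ) := by positivity
      calc ((Nat.factorial (n + 1)) : ℝ)⁻¹ * (‖ζ - (x : ℂ)‖ ^ (n + 1) * ‖iteratedDeriv (n + 1) (deriv f) (x : ℂ)‖)
          ≤ ((Nat.factorial (n + 1)) : ℝ)⁻¹ * (R ^ (n + 1) * (A * σ ^ (n + 2))) := by
            apply mul_le_mul_of_nonneg_left _ (by positivity)
            exact mul_le_mul hpow hd (norm_nonneg _) (by positivity)
        _ = A * σ * ((σ * R) ^ (n + 1) / (Nat.factorial (n + 1))) := by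
            rw [mul_pow]
            field_simp
            ring
    have hsummM : Summable (fun n : ℕ => A * σ * ((σ * R) ^ (n + 1) / (Nat.factorial (n + 1)))) := hM.summable
    have hsumm : Summable (fun n : ℕ => ‖t (n + 1)‖) :=
      Summable.of_nonneg_of_le (fun n => norm_nonneg _) hbound hsummM
    calc ‖deriv f ζ - deriv f (x : ℂ)‖ = ‖∑' n, t (n + 1)‖ := by rw [hs1.tsum_eq]
      _ ≤ ∑' n, ‖t (n + 1)‖ := norm_tsum_le_tsum_norm hsumm
      _ ≤ ∑' n, A * σ * ((σ * R) ^ (n + 1) / (Nat.factorial (n + 1))) := hsumm.tsum_le_tsum hbound hsummM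
      _ = C := by rw [hM.tsum_eq]
  -- the auxiliary function h
  set h : ℂ → ℂ := fun ζ => f ζ - deriv f (x : ℂ) * ζ with hhdef
  have hhdiff : ∀ ζ : ℂ, DifferentiableAt ℂ h ζ := fun ζ =>
    (hf ζ).sub ((differentiableAt_id.const_mul _))
  have hderivh : ∀ ζ : ℂ, deriv h ζ = deriv f ζ - deriv f (x : ℂ) := by
    intro ζ
    have h1 : HasDerivAt (fun y : ℂ => deriv f (x : ℂ) * y) (deriv f (x : ℂ)) ζ := by
      simpa using (hasDerivAt_id ζ).const_mul (deriv f (x : ℂ))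
    have h2 : HasDerivAt h (deriv f ζ - deriv f (x : ℂ)) ζ := (hf ζ).hasDerivAt.sub h1
    exact h2.deriv
  have hhbound : ∀ ζ ∈ Metric.ball (x : ℂ) R, ‖deriv h ζ‖ ≤ C := by
    intro ζ hζ
    rw [hderivh ζ]
    exact key ζ hζ
  intro z hz w hw hzw
  simp only at hzw
  have hlin : ((α : ℂ) + deriv f (x : ℂ)) * (z - w) = h w - h z := by
    simp only [hhdef]
    linear_combination hzw
  have hmvt : ‖h w - h z‖ ≤ C * ‖w - z‖ :=
    (convex_ball (x : ℂ) R).norm_image_sub_le_of_norm_deriv_le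
      (fun ζ _ => hhdiff ζ) hhbound hz hw
  have hnorm : c * ‖z - w‖ ≤ C * ‖z - w‖ := by
    have h3 : ‖((α : ℂ) + deriv f (x : ℂ)) * (z - w)‖ = c * ‖z - w‖ := by
      rw [norm_mul]
    rw [← h3, hlin, ← norm_neg (w - z)] at *
    simpa [norm_sub_rev, neg_sub] using hmvt
  by_contra hne
  have hzw0 : (0 : ℝ) < ‖z - w‖ := by
    rw [norm_pos_iff, sub_ne_zero]; exact hne
  nlinarith
end

section
/- Let f be an entire function, x ∈ ℝ, and suppose there exist A, σ > 0 such that |f^{(n)}(x)| ≤ A·σ^n for all n ≥ 1. Let α > Aσ and set g(z) = αz + f(z). Then for every R > 0 and every z ∈ ℂ with |z − x| = R, |g(z) − g(x)| ≥ αR − A(e^{σR} − 1). In particular, for the choice R = (1/σ)·log(α/(Aσ)) > 0, one has |g(z) − g(x)| ≥ (α/σ)·log(α/(Aσ)) − (α − Aσ)/σ for all z with |z − x| = R. -/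
open scoped Nat

lemma taylor_remainder_bound (f : ℂ → ℂ) (hf : Differentiable ℂ f) (x : ℝ) (A σ : ℝ)
    (hA : 0 < A) (hσ : 0 < σ)
    (hderiv : ∀ n : ℕ, 1 ≤ n → ‖iteratedDeriv n f (x : ℂ)‖ ≤ A * σ ^ n)
    (R : ℝ) (hR : 0 < R) (z : ℂ) (hz : ‖z - (x : ℂ)‖ = R) :
    ‖f z - f (x : ℂ)‖ ≤ A * (Real.exp (σ * R) - 1) := by
  set y : ℂ := z - (x : ℂ) with hy_def
  have hr : (0 : ℝ) < R + 1 := by linarith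
  set r : NNReal := ⟨R + 1, hr.le⟩ with hr_def
  have hps : HasFPowerSeriesOnBall f (cauchyPowerSeries f (x : ℂ) r) (x : ℂ) r :=
    (hf.differentiableOn).hasFPowerSeriesOnBall (by exact_mod_cast hr)
  have hy : y ∈ Metric.eball (0 : ℂ) r := by
    rw [Metric.mem_eball, edist_zero_right]
    have : ‖y‖₊ < r := by
      rw [← NNReal.coe_lt_coe]
      simp only [coe_nnnorm, hz, hr_def, NNReal.coe_mk]
      change R < R + 1
      linarith
    exact_mod_cast this
  have hsum := hps.hasSum_iteratedFDeriv hy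
  have hxy : (x : ℂ) + y = z := by simp [hy_def]
  rw [hxy] at hsum
  set c : ℕ → ℂ := fun n => ((n ! : ℂ))⁻¹ * (y ^ n * iteratedDeriv n f (x : ℂ)) with hc_def
  have hc : HasSum c (f z) := by
    convert! hsum using 2 with n
    rw [iteratedFDeriv_apply_eq_iteratedDeriv_mul_prod]
    simp [hc_def, smul_eq_mul]
  have hc0 : c 0 = f (x : ℂ) := by simp [hc_def]
  have hc' : HasSum (fun n => c (n + 1)) (f z - f (x : ℂ)) := by
    rw [hasSum_nat_add_iff 1]
    simpa [Finset.sum_range_one, hc0] using hc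
  -- bound series
  have hexp : HasSum (fun n : ℕ => (σ * R) ^ n / n !) (Real.exp (σ * R)) := by
    rw [Real.exp_eq_exp_ℝ]
    exact NormedSpace.expSeries_div_hasSum_exp (σ * R)
  have hexp' : HasSum (fun n : ℕ => (σ * R) ^ (n + 1) / (n + 1)!) (Real.exp (σ * R) - 1) := by
    have h2 : HasSum (fun n : ℕ => (σ * R) ^ n / n !)
        ((Real.exp (σ * R) - 1) + ∑ i ∈ Finset.range 1, (σ * R) ^ i / i !) := by
      simpa using hexp
    exact (hasSum_nat_add_iff (f := fun n : ℕ => (σ * R) ^ n / n !) 1).2 h2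
  have hg : HasSum (fun n : ℕ => A * ((σ * R) ^ (n + 1) / (n + 1)!)) (A * (Real.exp (σ * R) - 1)) :=
    hexp'.mul_left A
  have hbound : ∀ n : ℕ, ‖c (n + 1)‖ ≤ A * ((σ * R) ^ (n + 1) / (n + 1)!) := by
    intro n
    have h1 : ‖c (n + 1)‖ = (((n + 1)! : ℝ))⁻¹ * (R ^ (n + 1) * ‖iteratedDeriv (n + 1) f (x : ℂ)‖) := by
      simp [hc_def, norm_mul, norm_pow, hz, abs_of_nonneg, Nat.cast_nonneg]
    rw [h1]
    have h2 : ‖iteratedDeriv (n + 1) f (x : ℂ)‖ ≤ A * σ ^ (n + 1) := hderiv (n + 1) (by omega)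
    calc (((n + 1)! : ℝ))⁻¹ * (R ^ (n + 1) * ‖iteratedDeriv (n + 1) f (x : ℂ)‖)
        ≤ (((n + 1)! : ℝ))⁻¹ * (R ^ (n + 1) * (A * σ ^ (n + 1))) :=
          mul_le_mul_of_nonneg_left
            (mul_le_mul_of_nonneg_left h2 (by positivity)) (by positivity)
      _ = A * ((σ * R) ^ (n + 1) / (n + 1)!) := by rw [mul_pow]; ring
  calc ‖f z - f (x : ℂ)‖ = ‖∑' n, c (n + 1)‖ := by rw [hc'.tsum_eq]
    _ ≤ A * (Real.exp (σ * R) - 1) := tsum_of_norm_bounded hg hbound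

/-- Lower bound on the circle: `|g(z) − g(x)| ≥ αR − A(e^{σR} − 1)` for
`|z − x| = R`, and for the maximizing choice `R = (1/σ) log(α/(Aσ))` the bound
becomes `(α/σ) log(α/(Aσ)) − (α − Aσ)/σ`. -/
theorem g_lower_bound_on_circle
    (f : ℂ → ℂ) (hf : Differentiable ℂ f) (x : ℝ) (A σ α : ℝ)
    (hA : 0 < A) (hσ : 0 < σ)
    (hderiv : ∀ n : ℕ, 1 ≤ n → ‖iteratedDeriv n f (x : ℂ)‖ ≤ A * σ ^ n)
    (hα : A * σ < α) :
    (∀ R : ℝ, 0 < R → ∀ z : ℂ, ‖z - (x : ℂ)‖ = R →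
        α * R - A * (Real.exp (σ * R) - 1)
          ≤ ‖((α : ℂ) * z + f z) - ((α : ℂ) * (x : ℂ) + f (x : ℂ))‖) ∧
    (0 < (1 / σ) * Real.log (α / (A * σ)) ∧
      ∀ z : ℂ, ‖z - (x : ℂ)‖ = (1 / σ) * Real.log (α / (A * σ)) →
        (α / σ) * Real.log (α / (A * σ)) - (α - A * σ) / σ
          ≤ ‖((α : ℂ) * z + f z) - ((α : ℂ) * (x : ℂ) + f (x : ℂ))‖) := by
  have hαpos : 0 < α := lt_trans (by positivity) hα
  have main : ∀ R : ℝ, 0 < R → ∀ z : ℂ, ‖z - (x : ℂ)‖ = R →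
      α * R - A * (Real.exp (σ * R) - 1)
        ≤ ‖((α : ℂ) * z + f z) - ((α : ℂ) * (x : ℂ) + f (x : ℂ))‖ := by
    intro R hR z hz
    have htaylor := taylor_remainder_bound f hf x A σ hA hσ hderiv R hR z hz
    have hdecomp : ((α : ℂ) * z + f z) - ((α : ℂ) * (x : ℂ) + f (x : ℂ))
        = (α : ℂ) * (z - (x : ℂ)) + (f z - f (x : ℂ)) := by ring
    have hnorm1 : ‖(α : ℂ) * (z - (x : ℂ))‖ = α * R := by
      rw [norm_mul, hz, Complex.norm_real, Real.norm_eq_abs, abs_of_pos hαpos]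
    have htri : ‖(α : ℂ) * (z - (x : ℂ))‖ - ‖f z - f (x : ℂ)‖
        ≤ ‖(α : ℂ) * (z - (x : ℂ)) + (f z - f (x : ℂ))‖ := by
      have := norm_add_le ((α : ℂ) * (z - (x : ℂ)) + (f z - f (x : ℂ))) (-(f z - f (x : ℂ)))
      simp only [add_neg_cancel_right, norm_neg] at this
      linarith
    rw [hdecomp]
    rw [hnorm1] at htri
    linarith
  refine ⟨main, ?_, ?_⟩
  · have hratio : 1 < α / (A * σ) := (one_lt_div (by positivity)).2 hα
    have := Real.log_pos hratio
    positivity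
  · intro z hz
    have hratio : 1 < α / (A * σ) := (one_lt_div (by positivity)).2 hα
    have hlog : 0 < Real.log (α / (A * σ)) := Real.log_pos hratio
    set L := Real.log (α / (A * σ)) with hL
    have hR0 : 0 < (1 / σ) * L := by positivity
    have key := main ((1 / σ) * L) hR0 z hz
    have hσL : σ * ((1 / σ) * L) = L := by field_simp
    rw [hσL, Real.exp_log (by positivity)] at key
    have heq : α * ((1 / σ) * L) - A * (α / (A * σ) - 1)
        = (α / σ) * L - (α - A * σ) / σ := by field_simp
    linarith [key, heq.ge]
end

section
/- Let f : ℝ → ℝ be continuous and Lipschitz with constant B < α for some α > 0, so that g(t) = αt + f(t) is a strictly increasing bijection of ℝ. Define h(u) = g⁻¹(u) − u/α. Then the following duality identities hold: f(t) = −α·h(f(t) + αt) for every t ∈ ℝ, and h(u) = −(1/α)·f(h(u) + u/α) for every u ∈ ℝ. -/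
/-- Duality identities for the ramp-addition mapping: with `g(t) = αt + f(t)`
strictly increasing (since `f` is `B`-Lipschitz with `B < α`) and
`h(u) = g⁻¹(u) − u/α`, one has `f(t) = −α h(f(t) + αt)` and
`h(u) = −(1/α) f(h(u) + u/α)`. -/
theorem ramp_addition_duality
    (f : ℝ → ℝ) (α : ℝ) (B : NNReal) (hα : 0 < α) (hB : (B : ℝ) < α)
    (hf : Continuous f) (hlip : LipschitzWith B f) :
    (∀ t : ℝ, f t =
        -α * (Function.invFun (fun s : ℝ => α * s + f s) (f t + α * t) -
          (f t + α * t) / α)) ∧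
    (∀ u : ℝ,
        Function.invFun (fun s : ℝ => α * s + f s) u - u / α =
          -(1 / α) * f ((Function.invFun (fun s : ℝ => α * s + f s) u - u / α) +
            u / α)) := by
  set g : ℝ → ℝ := fun s : ℝ => α * s + f s with hg
  have key : ∀ s t : ℝ, t < s → (α - B) * (s - t) ≤ g s - g t := by
    intro s t hts
    have h1 : |f s - f t| ≤ B * |s - t| := by
      have := hlip.dist_le_mul s t
      simpa [Real.dist_eq] using this
    have h2 : -(B * (s - t)) ≤ f s - f t := by
      have habs : |s - t| = s - t := abs_of_pos (by linarith)
      rw [habs] at h1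
      have := neg_abs_le (f s - f t)
      linarith [abs_le.mp h1]
    simp only [hg]
    ring_nf
    nlinarith
  have hmono : StrictMono g := by
    intro t s hts
    have := key s t hts
    have hpos : 0 < (α - B) * (s - t) := by
      apply mul_pos (by linarith) (by linarith)
    linarith
  have hinj : Function.Injective g := hmono.injective
  have hcont : Continuous g := by
    exact (continuous_const.mul continuous_id).add hf
  have htop : Filter.Tendsto g Filter.atTop Filter.atTop := by
    apply Filter.tendsto_atTop_mono' _
      (show ∀ᶠ t in Filter.atTop, (α - B) * (t - 0) + g 0 ≤ g t from ?_)
    · have : Filter.Tendsto (fun t : ℝ => (α - B) * (t - 0) + g 0)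
        Filter.atTop Filter.atTop := by
        apply Filter.tendsto_atTop_add_const_right
        apply Filter.Tendsto.const_mul_atTop (by linarith : (0:ℝ) < α - B)
        simpa using Filter.tendsto_atTop_add_const_right _ (0:ℝ) Filter.tendsto_id
      exact this
    · filter_upwards [Filter.eventually_gt_atTop 0] with t ht
      have := key t 0 ht
      linarith
  have hbot : Filter.Tendsto g Filter.atBot Filter.atBot := by
    apply Filter.tendsto_atBot_mono' _
      (show ∀ᶠ t in Filter.atBot, g t ≤ (α - B) * (t - 0) + g 0 from ?_)
    · have : Filter.Tendsto (fun t : ℝ => (α - B) * (t - 0) + g 0)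
        Filter.atBot Filter.atBot := by
        apply Filter.tendsto_atBot_add_const_right
        apply Filter.Tendsto.const_mul_atBot (by linarith : (0:ℝ) < α - B)
        simpa using Filter.tendsto_atBot_add_const_right _ (0:ℝ) Filter.tendsto_id
      exact this
    · filter_upwards [Filter.eventually_lt_atBot 0] with t ht
      have := key 0 t ht
      linarith
  have hsurj : Function.Surjective g := by
    intro y
    obtain ⟨a, ha⟩ := htop.eventually_ge_atTop y |>.exists
    obtain ⟨b, hb⟩ := hbot.eventually_le_atBot y |>.exists
    obtain ⟨x, _, hx⟩ := intermediate_value_uIcc (a := b) (b := a)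
      (hcont.continuousOn) (show y ∈ Set.uIcc (g b) (g a) from
        Set.mem_uIcc.mpr (Or.inl ⟨hb, ha⟩))
    exact ⟨x, hx⟩
  have hleft : ∀ t : ℝ, Function.invFun g (g t) = t := fun t =>
    Function.leftInverse_invFun hinj t
  have hright : ∀ u : ℝ, g (Function.invFun g u) = u := fun u =>
    Function.rightInverse_invFun hsurj u
  constructor
  · intro t
    have h1 : f t + α * t = g t := by simp [hg]; ring
    rw [h1, hleft t]
    field_simp
    ring
  · intro u
    set v := Function.invFun g u with hv
    have h1 : α * v + f v = u := hright u
    have h2 : v - u / α + u / α = v := by ring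
    rw [h2]
    have : f v = u - α * v := by linarith
    rw [this]
    field_simp
    ring
end
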